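/- Let L be a Lie derivation of G, and define P : A → A by P(a) = eL(a)e and hA : A → B by hA(a) = fL(a)f. Suppose ℓA : A → A is an R-linear map such that ℓA(a)·m = m·hA(a) for all a ∈ A and m ∈ M, and suppose M is faithful as a left A-module (aM = 0 implies a = 0 for a ∈ A). Then P − ℓA is a derivation of A: (P − ℓA)(aa') = (P − ℓA)(a)·a' + a·(P − ℓA)(a') for all a, a' ∈ A. -/

import Mathlib

/-- `x` lies in the Peirce corner `A = eGe`. -/
def cA {G : Type*} [Ring G] (e x : G) : Prop := e * x * e = x

/-- `x` lies in the Peirce corner `B = fGf`, where `f = 1 - e`. -/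
def cB {G : Type*} [Ring G] (e x : G) : Prop := (1 - e) * x * (1 - e) = x

/-- `x` lies in the Peirce corner `M = eGf`. -/
def cM {G : Type*} [Ring G] (e x : G) : Prop := e * x * (1 - e) = x

/-- `x` lies in the Peirce corner `N = fGe`. -/
def cN {G : Type*} [Ring G] (e x : G) : Prop := (1 - e) * x * e = x

set_option linter.unusedVariables false

section helpers
variable {G : Type*} [Ring G] {e a m : G}

lemma cA_ea (he : e * e = e) (ha : cA e a) : e * a = a := by
  have ha' : e * a * e = a := ha
  conv_lhs => rw [← ha']
  rw [← mul_assoc, ← mul_assoc, he]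
  exact ha'

lemma cA_ae (he : e * e = e) (ha : cA e a) : a * e = a := by
  have ha' : e * a * e = a := ha
  conv_lhs => rw [← ha']
  rw [mul_assoc, mul_assoc, he, ← mul_assoc]
  exact ha'

lemma cA_af (he : e * e = e) (ha : cA e a) : a * (1 - e) = 0 := by
  rw [mul_sub, mul_one, cA_ae he ha, sub_self]

lemma cA_fa (he : e * e = e) (ha : cA e a) : (1 - e) * a = 0 := by
  rw [sub_mul, one_mul, cA_ea he ha, sub_self]

lemma cM_em (he : e * e = e) (hm : cM e m) : e * m = m := by
  have hm' : e * m * (1 - e) = m := hm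
  conv_lhs => rw [← hm']
  rw [← mul_assoc, ← mul_assoc, he]
  exact hm'

lemma cM_mf (he : e * e = e) (hm : cM e m) : m * (1 - e) = m := by
  have hm' : e * m * (1 - e) = m := hm
  conv_lhs => rw [← hm']
  rw [mul_assoc, mul_assoc, mul_sub, mul_one, sub_mul, one_mul, he, sub_self, sub_zero]
  rw [← mul_assoc]
  exact hm'

lemma cM_me (he : e * e = e) (hm : cM e m) : m * e = 0 := by
  have h : m * (1 - e) = m := cM_mf he hm
  rw [mul_sub, mul_one, sub_eq_self] at h
  exact h

end helpers

/-- Remark 2.3(iii): if `L` is a Lie derivation of `G`, `ℓA : A → A` is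
`R`-linear with `ℓA(a)·m = m·hA(a)` for all `a ∈ A`, `m ∈ M`, and `M` is a faithful left
`A`-module, then `P - ℓA` is a derivation of `A`, where `P a = eL(a)e`, `hA a = fL(a)f`. -/


theorem stmt_17
    {R : Type*} [CommRing R] {G : Type*} [Ring G] [Algebra R G]
    (e : G) (he : e * e = e) (he0 : e ≠ 0) (he1 : e ≠ 1)
    (hM2 : ∀ x : G, cM e x → x + x = 0 → x = 0)
    (hN2 : ∀ x : G, cN e x → x + x = 0 → x = 0)
    (L : G →ₗ[R] G)
    (hL : ∀ x y : G, L (x * y - y * x) = L x * y - y * L x + (x * L y - L y * x))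
    (ℓA : G →ₗ[R] G)
    (hmem : ∀ a : G, cA e a → cA e (ℓA a))
    (hcomm : ∀ a m : G, cA e a → cM e m → ℓA a * m = m * ((1 - e) * L a * (1 - e)))
    (hfaith : ∀ a : G, cA e a → (∀ m : G, cM e m → a * m = 0) → a = 0) :
    ∀ a a' : G, cA e a → cA e a' →
      e * L (a * a') * e - ℓA (a * a') =
        (e * L a * e - ℓA a) * a' + a * (e * L a' * e - ℓA a') := by

  have key : ∀ a m : G, cA e a → cM e m →
      e * L (a * m) * (1 - e) =
        (e * L a * e) * m - m * ((1 - e) * L a * (1 - e)) + a * (e * L m * (1 - e)) := by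
    intro a m ha hm
    have hma : m * a = 0 := by
      rw [← cA_ea he ha, ← mul_assoc, cM_me he hm, zero_mul]
    have h := hL a m
    rw [hma, sub_zero] at h
    rw [h]
    set f := 1 - e with hf
    have g2 : ∀ x : G, e * (m * x) = m * x := fun x => by rw [← mul_assoc, cM_em he hm]
    have g3 : ∀ x : G, m * (f * x) = m * x := fun x => by rw [← mul_assoc, cM_mf he hm]
    have g5 : ∀ x : G, a * (e * x) = a * x := fun x => by rw [← mul_assoc, cA_ae he ha]
    have g1 : ∀ x : G, e * (a * x) = a * x := fun x => by rw [← mul_assoc, cA_ea he ha]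
    simp only [mul_sub, sub_mul, mul_add, add_mul, mul_assoc, g1, g2, g3, g5,
      cM_mf he hm, cM_em he hm, cA_af he ha, cA_fa he ha, mul_zero, zero_mul, sub_zero]
    simp only [hf, cM_mf he hm, cA_af he ha, mul_zero, sub_zero]
  intro a a' ha ha'
  have haa' : cA e (a * a') := by
    show e * (a * a') * e = a * a'
    rw [← mul_assoc, cA_ea he ha, mul_assoc, cA_ae he ha']
  rw [← sub_eq_zero]
  apply hfaith _ ?_ ?_
  · -- membership in A
    have c1 : cA e (e * L (a * a') * e) := by
      show e * (e * L (a * a') * e) * e = e * L (a * a') * e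
      rw [← mul_assoc, ← mul_assoc, he, mul_assoc, he]
    have c2 : cA e (e * L a * e) := by
      show e * (e * L a * e) * e = e * L a * e
      rw [← mul_assoc, ← mul_assoc, he, mul_assoc, he]
    have c3 : cA e (e * L a' * e) := by
      show e * (e * L a' * e) * e = e * L a' * e
      rw [← mul_assoc, ← mul_assoc, he, mul_assoc, he]
    have csub : ∀ x y : G, cA e x → cA e y → cA e (x - y) := by
      intro x y hx hy
      show e * (x - y) * e = x - y
      rw [mul_sub, sub_mul]
      exact congrArg₂ (· - ·) hx hy
    have cadd : ∀ x y : G, cA e x → cA e y → cA e (x + y) := by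
      intro x y hx hy
      show e * (x + y) * e = x + y
      rw [mul_add, add_mul]
      exact congrArg₂ (· + ·) hx hy
    have cmul : ∀ x y : G, cA e x → cA e y → cA e (x * y) := by
      intro x y hx hy
      show e * (x * y) * e = x * y
      rw [← mul_assoc, cA_ea he hx, mul_assoc, cA_ae he hy]
    exact csub _ _ (csub _ _ c1 (hmem _ haa'))
      (cadd _ _ (cmul _ _ (csub _ _ c2 (hmem _ ha)) ha')
        (cmul _ _ ha (csub _ _ c3 (hmem _ ha'))))
  · intro m hm
    have hm' : cM e (a' * m) := by
      show e * (a' * m) * (1 - e) = a' * m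
      rw [← mul_assoc, cA_ea he ha', mul_assoc, cM_mf he hm]
    have h1 := key (a * a') m haa' hm
    have h2 := key a (a' * m) ha hm'
    have h3 := key a' m ha' hm
    rw [h3, ← mul_assoc a a' m] at h2
    have h4 := h1.symm.trans h2
    have c1 := hcomm (a * a') m haa' hm
    have c2 := hcomm a (a' * m) ha hm'
    have c3 : a * (ℓA a' * m) = a * (m * ((1 - e) * L a' * (1 - e))) := by
      rw [hcomm a' m ha' hm]
    linear_combination (norm := noncomm_ring) h4 - c1 + c2 + c3
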